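/- For every nonnegative integer n and real x, E_n(x) = sum over k from 0 to n of S(n,k) * k! * (sum over j from 0 to k of binomial(x,j) * (-1/2)^{k-j}), where E_n(x) is the n-th Euler polynomial. -/

import Mathlib

/-- Stirling numbers of the second kind. -/
def S2 : ℕ → ℕ → ℕ
  | 0, 0 => 1
  | 0, _ + 1 => 0
  | _ + 1, 0 => 0
  | n + 1, k + 1 => (k + 1) * S2 n (k + 1) + S2 n k

/-- The `n`-th Euler polynomial, defined via Bernoulli polynomials by the
identity `E_n(x) = (2/(n+1)) * (B_{n+1}(x) - 2^{n+1} B_{n+1}(x/2))`. -/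
noncomputable def eulerPoly (n : ℕ) (x : ℝ) : ℝ :=
  (2 / (n + 1)) *
    ((Polynomial.aeval x) (Polynomial.bernoulli (n + 1)) -
      2 ^ (n + 1) * (Polynomial.aeval (x / 2)) (Polynomial.bernoulli (n + 1)))

/-- Generalized binomial coefficient `x(x-1)⋯(x-k+1)/k!` for real `x`. -/
noncomputable def genBinom (x : ℝ) (k : ℕ) : ℝ :=
  (∏ i ∈ Finset.range k, (x - i)) / (Nat.factorial k)

section Aux
set_option linter.unusedTactic false


open PowerSeries Polynomial

theorem exp_sub_one_ne_zero : exp ℚ - 1 ≠ 0 := by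
  intro h
  have := congrArg (PowerSeries.coeff 1) h
  simp [coeff_exp, PowerSeries.coeff_one] at this

theorem bernoulli_half (m : ℕ) :
    (Polynomial.bernoulli m).eval (1/2 : ℚ) = (2 * (1/2 : ℚ)^m - 1) * _root_.bernoulli m := by
  set b0 : ℚ⟦X⟧ := mk fun n => aeval (0:ℚ) ((1 / n.factorial : ℚ) • Polynomial.bernoulli n) with hb0
  set f : ℚ⟦X⟧ := mk fun n => aeval (1/2:ℚ) ((1 / n.factorial : ℚ) • Polynomial.bernoulli n) with hf
  set g : ℚ⟦X⟧ := mk fun n => (2 * (1/2:ℚ)^n - 1) * _root_.bernoulli n / n.factorial with hg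
  have hgf : g = PowerSeries.C (2:ℚ) * rescale (1/2 : ℚ) b0 - b0 := by
    ext n
    simp only [hg, hb0, coeff_rescale, coeff_mk, map_sub, PowerSeries.coeff_C_mul,
      Polynomial.aeval_def, Polynomial.eval₂_smul, smul_eq_mul]
    have : Polynomial.eval₂ (algebraMap ℚ ℚ) 0 (Polynomial.bernoulli n) = _root_.bernoulli n := by
      rw [Polynomial.eval₂_eq_eval_map, Algebra.algebraMap_self, Polynomial.map_id,
        Polynomial.bernoulli_eval_zero]
    rw [this]
    have hfac : (n.factorial : ℚ) ≠ 0 := Nat.cast_ne_zero.mpr n.factorial_ne_zero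
    field_simp
    simp only [Algebra.algebraMap_self, RingHom.id_apply]
    linear_combination (_root_.bernoulli n - 2 * _root_.bernoulli n * (1/2:ℚ)^n) * (mul_inv_cancel₀ hfac)
  have hb0gf : b0 * (exp ℚ - 1) = PowerSeries.X := by
    rw [hb0]
    have := Polynomial.bernoulli_generating_function (0 : ℚ)
    rwa [rescale_zero, RingHom.coe_comp, Function.comp_apply, constantCoeff_exp, map_one,
      mul_one] at this
  have hfgf : f * (exp ℚ - 1) = PowerSeries.X * rescale (1/2:ℚ) (exp ℚ) :=
    Polynomial.bernoulli_generating_function (1/2 : ℚ)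
  set r : ℚ⟦X⟧ := rescale (1/2:ℚ) (exp ℚ) with hr
  have hrr : r * r = exp ℚ := by
    rw [hr, exp_mul_exp_eq_exp_add]; norm_num [rescale_one]
  have key : g * (exp ℚ - 1) = PowerSeries.X * r := by
    have h1 : rescale (1/2:ℚ) b0 * (r - 1) = rescale (1/2:ℚ) (b0 * (exp ℚ - 1)) := by
      rw [map_mul, map_sub, map_one]
    rw [hgf, ← hrr]
    have hfac : (r * r - 1) = (r - 1) * (r + 1) := by ring
    rw [hfac, sub_mul, mul_assoc, ← mul_assoc (rescale (1/2:ℚ) b0), h1, hb0gf, rescale_X]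
    have hb0' : b0 * ((r - 1) * (r + 1)) = PowerSeries.X := by
      rw [← hfac, hrr, hb0gf]
    rw [hb0']
    have hC : PowerSeries.C (1/2:ℚ) * PowerSeries.C (2:ℚ) = 1 := by
      rw [← map_mul]; norm_num
    ring_nf
    linear_combination (PowerSeries.X + PowerSeries.X * r) * hC
  have hfg : f = g := by
    apply mul_right_cancel₀ exp_sub_one_ne_zero
    rw [hfgf, key]
  have h2 := congrArg (PowerSeries.coeff m) hfg
  simp only [hf, hg, coeff_mk, map_smul, smul_eq_mul] at h2
  rw [show ((Polynomial.aeval (1/2:ℚ)) (Polynomial.bernoulli m) : ℚ)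
      = (Polynomial.bernoulli m).eval (1/2:ℚ) from by
        rw [Polynomial.aeval_def, Polynomial.eval₂_eq_eval_map, Algebra.algebraMap_self,
          Polynomial.map_id]] at h2
  have hfac : (m.factorial : ℚ) ≠ 0 := Nat.cast_ne_zero.mpr m.factorial_ne_zero
  field_simp at h2 ⊢
  have hpw : (2:ℚ)^m * (1/2:ℚ)^m = 1 := by rw [← mul_pow]; norm_num
  have h3 : Polynomial.eval (1/2:ℚ) (Polynomial.bernoulli m) * 2 ^ m * (m.factorial : ℚ)
      = ((2 - 2 ^ m) * _root_.bernoulli m) * (m.factorial : ℚ) := by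
    linear_combination (2 ^ m * (m.factorial : ℚ)) * h2 + 2 * _root_.bernoulli m * (m.factorial : ℚ) * hpw
  have h4 := mul_right_cancel₀ hfac h3
  linear_combination (1 - 2 ^ m) * h2 - 2 * _root_.bernoulli m * hpw + h4


theorem periodic_poly_const {R : Type*} [CommRing R] [IsDomain R] [CharZero R]
    (p : R[X]) (h : ∀ x : R, p.eval (x + 2) = p.eval x) : p = Polynomial.C (p.eval 0) := by
  have hk : ∀ k : ℕ, p.eval (2 * (k : R)) = p.eval 0 := by
    intro k
    induction k with
    | zero => norm_num
    | succ k ih =>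
      have h2 : ((2:R) * ((k:R)+1)) = 2 * (k:R) + 2 := by push_cast; ring
      rw [Nat.cast_add, Nat.cast_one, h2, h, ih]
  have hroot : (p - Polynomial.C (p.eval 0)) = 0 := by
    apply Polynomial.eq_zero_of_infinite_isRoot
    apply Set.infinite_of_injective_forall_mem
      (f := fun k : ℕ => (2 * (k : R)))
    · intro a b hab
      field_simp at hab
      exact_mod_cast (mul_left_cancel₀ two_ne_zero hab)
    · intro k
      simp only [Set.mem_setOf_eq, IsRoot.def, eval_sub, eval_C, hk k, sub_self]
  have := sub_eq_zero.mp hroot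
  exact this

theorem bernoulli_mult (m : ℕ) (x : ℚ) :
    2 ^ m * ((Polynomial.bernoulli m).eval (x / 2) + (Polynomial.bernoulli m).eval ((x + 1) / 2))
      = 2 * (Polynomial.bernoulli m).eval x := by
  rcases Nat.eq_zero_or_pos m with hm | hm
  · subst hm; norm_num
  obtain ⟨d, rfl⟩ := Nat.exists_eq_add_of_le hm
  set M := 1 + d with hM
  -- the defect polynomial
  set p : ℚ[X] := Polynomial.C ((2:ℚ)^M) * ((Polynomial.bernoulli M).comp (Polynomial.C (1/2 : ℚ) * Polynomial.X)
      + (Polynomial.bernoulli M).comp (Polynomial.C (1/2 : ℚ) * Polynomial.X + Polynomial.C (1/2 : ℚ)))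
      - Polynomial.C 2 * Polynomial.bernoulli M with hp
  have hev : ∀ y : ℚ, p.eval y = 2 ^ M * ((Polynomial.bernoulli M).eval (y / 2)
      + (Polynomial.bernoulli M).eval ((y + 1) / 2)) - 2 * (Polynomial.bernoulli M).eval y := by
    intro y
    simp only [hp, eval_sub, eval_mul, eval_add, eval_C, eval_comp, eval_mul, eval_C, eval_X]
    ring_nf
  have hper : ∀ y : ℚ, p.eval (y + 2) = p.eval y := by
    intro y
    have e1 : (Polynomial.bernoulli M).eval ((y + 2) / 2)
        = (Polynomial.bernoulli M).eval (y / 2) + M * (y / 2) ^ (M - 1) := by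
      have : (y + 2) / 2 = 1 + y / 2 := by ring
      rw [this, Polynomial.bernoulli_eval_one_add]
    have e2 : (Polynomial.bernoulli M).eval ((y + 2 + 1) / 2)
        = (Polynomial.bernoulli M).eval ((y + 1) / 2) + M * ((y + 1) / 2) ^ (M - 1) := by
      have : (y + 2 + 1) / 2 = 1 + (y + 1) / 2 := by ring
      rw [this, Polynomial.bernoulli_eval_one_add]
    have e3 : (Polynomial.bernoulli M).eval (y + 2)
        = (Polynomial.bernoulli M).eval y + M * y ^ (M - 1) + M * (y + 1) ^ (M - 1) := by
      have h1 : y + 2 = 1 + (1 + y) := by ring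
      rw [h1, Polynomial.bernoulli_eval_one_add, Polynomial.bernoulli_eval_one_add]
      ring_nf
    rw [hev, hev, e1, e2, e3, hM]
    have hpow : ∀ z : ℚ, (2:ℚ) ^ (1 + d) * (z / 2) ^ (1 + d - 1) = 2 * z ^ (1 + d - 1) := by
      intro z
      rw [Nat.add_sub_cancel_left, pow_add, pow_one, div_pow]
      have h2 : (2:ℚ)^d ≠ 0 := by positivity
      field_simp
    have h1 := hpow y
    have h2 := hpow (y + 1)
    ring_nf
    ring_nf at h1 h2
    linear_combination (M : ℚ) * h1 + (M : ℚ) * h2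
  have hzero : p.eval 0 = 0 := by
    have h0 : (0:ℚ)/2 = 0 := by norm_num
    have h1 : ((0:ℚ)+1)/2 = 1/2 := by norm_num
    rw [hev, h0, h1, Polynomial.bernoulli_eval_zero, bernoulli_half]
    have hpw : (2:ℚ)^M * (1/2:ℚ)^M = 1 := by rw [← mul_pow]; norm_num
    linear_combination 2 * (_root_.bernoulli M) * hpw
  have := periodic_poly_const p hper
  rw [hzero, map_zero] at this
  have hx := hev x
  rw [this] at hx
  simp only [eval_zero] at hx
  linarith [hx]

theorem poly_transfer (p q : ℚ[X]) (h : ∀ r : ℚ, p.eval r = q.eval r) (x : ℝ) :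
    (Polynomial.aeval x) p = (Polynomial.aeval x) q := by
  have : p = q := Polynomial.funext h
  rw [this]

theorem bp_one_add (m : ℕ) (x : ℝ) :
    (Polynomial.aeval (x + 1)) (Polynomial.bernoulli m)
      = (Polynomial.aeval x) (Polynomial.bernoulli m) + m * x ^ (m - 1) := by
  have h := poly_transfer ((Polynomial.bernoulli m).comp (Polynomial.X + Polynomial.C 1))
    (Polynomial.bernoulli m + Polynomial.C (m : ℚ) * Polynomial.X ^ (m - 1))
    (fun r => by
      rw [Polynomial.eval_comp]
      simp only [Polynomial.eval_add, Polynomial.eval_X, Polynomial.eval_C,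
        Polynomial.eval_mul, Polynomial.eval_pow]
      rw [add_comm r 1, Polynomial.bernoulli_eval_one_add]) x
  rw [Polynomial.aeval_comp] at h
  simpa using h

theorem bp_mult (m : ℕ) (x : ℝ) :
    2 ^ m * ((Polynomial.aeval (x / 2)) (Polynomial.bernoulli m)
        + (Polynomial.aeval ((x + 1) / 2)) (Polynomial.bernoulli m))
      = 2 * (Polynomial.aeval x) (Polynomial.bernoulli m) := by
  have h := poly_transfer
    (Polynomial.C ((2:ℚ)^m) * ((Polynomial.bernoulli m).comp (Polynomial.C (1/2 : ℚ) * Polynomial.X)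
      + (Polynomial.bernoulli m).comp (Polynomial.C (1/2 : ℚ) * Polynomial.X + Polynomial.C (1/2 : ℚ))))
    (Polynomial.C 2 * Polynomial.bernoulli m)
    (fun r => by
      simp only [Polynomial.eval_mul, Polynomial.eval_add, Polynomial.eval_C,
        Polynomial.eval_comp, Polynomial.eval_X]
      rw [show (1/2 : ℚ) * r = r / 2 by ring]
      rw [show r / 2 + 1/2 = (r+1)/2 by ring]
      exact bernoulli_mult m r) x
  simp only [map_mul, map_add, Polynomial.aeval_C, Polynomial.aeval_comp, Polynomial.aeval_X] at h
  have e1 : (algebraMap ℚ ℝ) ((2:ℚ)^m) = (2:ℝ)^m := by push_cast; norm_num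
  have e2 : (algebraMap ℚ ℝ) ((1:ℚ)/2) = (1:ℝ)/2 := by push_cast; norm_num
  have e3 : (algebraMap ℚ ℝ) (2:ℚ) = (2:ℝ) := by push_cast; norm_num
  rw [e1, e2, e3] at h
  rw [show (1:ℝ)/2 * x = x / 2 by ring] at h
  rw [show x / 2 + (1:ℝ)/2 = (x+1)/2 by ring] at h
  exact h

theorem euler_step (n : ℕ) (x : ℝ) :
    eulerPoly n (x + 1) + eulerPoly n x = 2 * x ^ n := by
  have hm := bp_mult (n + 1) x
  have ha := bp_one_add (n + 1) x
  rw [Nat.add_sub_cancel] at ha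
  have hn : ((n : ℝ) + 1) ≠ 0 := by positivity
  unfold eulerPoly
  push_cast at ha ⊢
  field_simp
  linear_combination ha - hm
theorem genBinom_zero (x : ℝ) : genBinom x 0 = 1 := by simp [genBinom]

theorem genBinom_succ (x : ℝ) (k : ℕ) :
    (k + 1 : ℝ) * genBinom x (k + 1) = (x - k) * genBinom x k := by
  unfold genBinom
  rw [Finset.prod_range_succ, Nat.factorial_succ]
  have h1 : (k.factorial : ℝ) ≠ 0 := Nat.cast_ne_zero.mpr k.factorial_ne_zero
  have h2 : ((k:ℝ) + 1) ≠ 0 := by positivity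
  push_cast
  field_simp

theorem genBinom_pascal (x : ℝ) (k : ℕ) :
    genBinom (x + 1) (k + 1) = genBinom x (k + 1) + genBinom x k := by
  unfold genBinom
  have hL : (∏ i ∈ Finset.range (k + 1), (x + 1 - i))
      = (x + 1) * ∏ i ∈ Finset.range k, (x - i) := by
    rw [Finset.prod_range_succ']
    push_cast
    rw [mul_comm]
    congr 1
    · norm_num
    · apply Finset.prod_congr rfl; intro i _; push_cast; ring
  rw [hL, Finset.prod_range_succ, Nat.factorial_succ]
  have h1 : (k.factorial : ℝ) ≠ 0 := Nat.cast_ne_zero.mpr k.factorial_ne_zero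
  have h2 : ((k:ℝ) + 1) ≠ 0 := by positivity
  push_cast
  field_simp
  ring

theorem S2_eq_zero_of_lt : ∀ n k : ℕ, n < k → S2 n k = 0 := by
  intro n
  induction n with
  | zero => intro k hk; match k, hk with
    | k + 1, _ => rfl
  | succ n ih =>
    intro k hk
    match k, hk with
    | k + 1, hk =>
      have h1 : n < k + 1 := by omega
      have h2 : n < k := by omega
      show (k + 1) * S2 n (k + 1) + S2 n k = 0
      rw [ih _ h1, ih _ h2]
      ring

theorem stirling (n : ℕ) (x : ℝ) :
    x ^ n = ∑ k ∈ Finset.range (n + 1), (S2 n k : ℝ) * (Nat.factorial k) * genBinom x k := by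
  induction n with
  | zero => simp [genBinom, show S2 0 0 = 1 from rfl]
  | succ n ih =>
    have key : ∀ k : ℕ, x * genBinom x k
        = ((k:ℝ) + 1) * genBinom x (k + 1) + k * genBinom x k := by
      intro k
      linear_combination -genBinom_succ x k
    have e1 : x ^ (n + 1)
        = ∑ k ∈ Finset.range (n + 1), ((S2 n k : ℝ) * (Nat.factorial k)
            * (((k:ℝ) + 1) * genBinom x (k + 1)) + (S2 n k : ℝ) * (Nat.factorial k)
            * ((k:ℝ) * genBinom x k)) := by
      rw [pow_succ, ih, Finset.sum_mul]
      apply Finset.sum_congr rfl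
      intro k _
      rw [show (S2 n k : ℝ) * (Nat.factorial k) * genBinom x k * x
          = (S2 n k : ℝ) * (Nat.factorial k) * (x * genBinom x k) by ring, key k]
      ring
    rw [e1, Finset.sum_add_distrib]
    -- target side
    rw [Finset.sum_range_succ' (fun k => (S2 (n+1) k : ℝ) * (Nat.factorial k) * genBinom x k)]
    have hz : (S2 (n+1) 0 : ℝ) * (Nat.factorial 0) * genBinom x 0 = 0 := by
      show ((0:ℕ) : ℝ) * _ * _ = 0
      simp
    rw [hz, add_zero]
    have expand : ∀ k : ℕ, (S2 (n+1) (k+1) : ℝ) * (Nat.factorial (k+1)) * genBinom x (k+1)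
        = ((k:ℝ)+1) * (S2 n (k+1) : ℝ) * (Nat.factorial (k+1)) * genBinom x (k+1)
          + (S2 n k : ℝ) * (Nat.factorial k) * (((k:ℝ)+1) * genBinom x (k+1)) := by
      intro k
      show (((k + 1) * S2 n (k + 1) + S2 n k : ℕ) : ℝ) * _ * _ = _
      rw [Nat.factorial_succ]
      push_cast
      ring
    rw [Finset.sum_congr rfl (fun k _ => expand k), Finset.sum_add_distrib]
    have swap : ∑ k ∈ Finset.range (n+1), ((k:ℝ)+1) * (S2 n (k+1) : ℝ)
          * (Nat.factorial (k+1)) * genBinom x (k+1)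
        = ∑ k ∈ Finset.range (n+1), (S2 n k : ℝ) * (Nat.factorial k) * ((k:ℝ) * genBinom x k) := by
      set f : ℕ → ℝ := fun k => ((k:ℝ)) * (S2 n k : ℝ) * (Nat.factorial k : ℝ) * genBinom x k
        with hfdef
      have h1 := Finset.sum_range_succ' f (n+1)
      have h2 := Finset.sum_range_succ f (n+1)
      have hf0 : f 0 = 0 := by simp [hfdef]
      have hfn : f (n+1) = 0 := by
        simp [hfdef, S2_eq_zero_of_lt n (n+1) (Nat.lt_succ_self n)]
      have key2 : ∑ k ∈ Finset.range (n+1), f (k+1) = ∑ k ∈ Finset.range (n+1), f k := by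
        rw [hf0, add_zero] at h1
        rw [hfn, add_zero] at h2
        rw [← h1, h2]
      calc ∑ k ∈ Finset.range (n+1), ((k:ℝ)+1) * (S2 n (k+1) : ℝ)
            * (Nat.factorial (k+1)) * genBinom x (k+1)
          = ∑ k ∈ Finset.range (n+1), f (k+1) := by
            apply Finset.sum_congr rfl; intro k _; simp only [hfdef]; push_cast; ring
        _ = ∑ k ∈ Finset.range (n+1), f k := key2
        _ = ∑ k ∈ Finset.range (n+1), (S2 n k : ℝ) * (Nat.factorial k)
            * ((k:ℝ) * genBinom x k) := by
            apply Finset.sum_congr rfl; intro k _; simp only [hfdef]; ring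
    rw [swap]
    ring
noncomputable def Ak (k : ℕ) (x : ℝ) : ℝ :=
  ∑ j ∈ Finset.range (k + 1), genBinom x j * (-1 / 2 : ℝ) ^ (k - j)

theorem Ak_zero (x : ℝ) : Ak 0 x = 1 := by simp [Ak, genBinom]

theorem Ak_succ (k : ℕ) (x : ℝ) :
    Ak (k + 1) x = genBinom x (k + 1) + (-1 / 2 : ℝ) * Ak k x := by
  unfold Ak
  rw [Finset.sum_range_succ]
  have h1 : ∀ j ∈ Finset.range (k + 1),
      genBinom x j * (-1 / 2 : ℝ) ^ (k + 1 - j)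
        = (-1 / 2 : ℝ) * (genBinom x j * (-1 / 2 : ℝ) ^ (k - j)) := by
    intro j hj
    have hjk : j ≤ k := Nat.lt_succ_iff.mp (Finset.mem_range.mp hj)
    rw [show k + 1 - j = (k - j) + 1 by omega, pow_succ]
    ring
  rw [Finset.sum_congr rfl h1, ← Finset.mul_sum]
  simp
  ring
theorem Ak_pascal (k : ℕ) (x : ℝ) : Ak (k + 1) (x + 1) = Ak (k + 1) x + Ak k x := by
  have expand : ∀ y : ℝ, Ak (k + 1) y
      = (∑ j ∈ Finset.range (k + 1), genBinom y (j + 1) * (-1 / 2 : ℝ) ^ (k - j))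
        + (-1 / 2 : ℝ) ^ (k + 1) := by
    intro y
    unfold Ak
    rw [Finset.sum_range_succ' (fun j => genBinom y j * (-1 / 2 : ℝ) ^ (k + 1 - j))]
    congr 1
    · apply Finset.sum_congr rfl
      intro j _
      rw [Nat.succ_sub_succ]
    · rw [genBinom_zero, Nat.sub_zero, one_mul]
  rw [expand, expand]
  have : ∑ j ∈ Finset.range (k + 1), genBinom (x + 1) (j + 1) * (-1 / 2 : ℝ) ^ (k - j)
      = (∑ j ∈ Finset.range (k + 1), genBinom x (j + 1) * (-1 / 2 : ℝ) ^ (k - j))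
        + ∑ j ∈ Finset.range (k + 1), genBinom x j * (-1 / 2 : ℝ) ^ (k - j) := by
    rw [← Finset.sum_add_distrib]
    apply Finset.sum_congr rfl
    intro j _
    rw [genBinom_pascal]
    ring
  rw [this]
  unfold Ak
  ring
theorem Ak_step (k : ℕ) (x : ℝ) : Ak k (x + 1) + Ak k x = 2 * genBinom x k := by
  induction k with
  | zero => rw [Ak_zero, Ak_zero, genBinom_zero]; norm_num
  | succ k ih =>
    rw [Ak_pascal, Ak_succ]
    ring
theorem R_step (n : ℕ) (x : ℝ) :
    (∑ k ∈ Finset.range (n + 1), (S2 n k : ℝ) * (Nat.factorial k) * Ak k (x + 1))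
      + (∑ k ∈ Finset.range (n + 1), (S2 n k : ℝ) * (Nat.factorial k) * Ak k x)
    = 2 * x ^ n := by
  rw [← Finset.sum_add_distrib]
  rw [show (2 : ℝ) * x ^ n = 2 * (x ^ n) from rfl, stirling n x, Finset.mul_sum]
  apply Finset.sum_congr rfl
  intro k _
  rw [show (S2 n k : ℝ) * (Nat.factorial k) * Ak k (x + 1)
      + (S2 n k : ℝ) * (Nat.factorial k) * Ak k x
      = (S2 n k : ℝ) * (Nat.factorial k) * (Ak k (x + 1) + Ak k x) by ring, Ak_step]
  ring
noncomputable def gbPoly (j : ℕ) : Polynomial ℝ :=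
  Polynomial.C ((Nat.factorial j : ℝ)⁻¹) * ∏ i ∈ Finset.range j, (Polynomial.X - Polynomial.C (i:ℝ))

theorem gbPoly_eval (x : ℝ) (j : ℕ) : (gbPoly j).eval x = genBinom x j := by
  simp only [gbPoly, genBinom, Polynomial.eval_mul, Polynomial.eval_C, Polynomial.eval_prod,
    Polynomial.eval_sub, Polynomial.eval_X]
  rw [div_eq_mul_inv, mul_comm]

noncomputable def RP (n : ℕ) : Polynomial ℝ :=
  ∑ k ∈ Finset.range (n + 1), Polynomial.C ((S2 n k : ℝ) * (Nat.factorial k)) *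
    ∑ j ∈ Finset.range (k + 1), gbPoly j * Polynomial.C ((-1/2 : ℝ) ^ (k - j))

theorem RP_eval (n : ℕ) (x : ℝ) :
    (RP n).eval x = ∑ k ∈ Finset.range (n + 1), (S2 n k : ℝ) * (Nat.factorial k) * Ak k x := by
  simp only [RP, Polynomial.eval_finset_sum, Polynomial.eval_mul, Polynomial.eval_C, Ak,
    gbPoly_eval]

noncomputable def EPol (n : ℕ) : Polynomial ℝ :=
  Polynomial.C (2 / ((n : ℝ) + 1)) * (((Polynomial.bernoulli (n + 1)).map (algebraMap ℚ ℝ)) -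
    Polynomial.C ((2:ℝ) ^ (n + 1)) *
      ((Polynomial.bernoulli (n + 1)).map (algebraMap ℚ ℝ)).comp
        (Polynomial.C (1/2 : ℝ) * Polynomial.X))

theorem EPol_eval (n : ℕ) (x : ℝ) : (EPol n).eval x = eulerPoly n x := by
  have hmap : ∀ y : ℝ, ((Polynomial.bernoulli (n + 1)).map (algebraMap ℚ ℝ)).eval y
      = (Polynomial.aeval y) (Polynomial.bernoulli (n + 1)) := fun y => by
    rw [Polynomial.aeval_def, Polynomial.eval_map]
  simp only [EPol, eulerPoly, Polynomial.eval_mul, Polynomial.eval_sub, Polynomial.eval_C,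
    Polynomial.eval_comp, Polynomial.eval_X, hmap]
  rw [show (1/2 : ℝ) * x = x / 2 by ring]

theorem euler_poly_eq_stirling2_sum' (n : ℕ) (x : ℝ) :
    eulerPoly n x =
      ∑ k ∈ Finset.range (n + 1),
        (S2 n k : ℝ) * (Nat.factorial k) *
          ∑ j ∈ Finset.range (k + 1), genBinom x j * (-1 / 2 : ℝ) ^ (k - j) := by
  have hAk : ∀ y : ℝ, (∑ k ∈ Finset.range (n + 1), (S2 n k : ℝ) * (Nat.factorial k) *
      ∑ j ∈ Finset.range (k + 1), genBinom y j * (-1 / 2 : ℝ) ^ (k - j))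
      = ∑ k ∈ Finset.range (n + 1), (S2 n k : ℝ) * (Nat.factorial k) * Ak k y := by
    intro y; rfl
  set p : Polynomial ℝ := EPol n - RP n with hp
  have hstep : ∀ y : ℝ, p.eval (y + 1) = - p.eval y := by
    intro y
    simp only [hp, Polynomial.eval_sub, EPol_eval, RP_eval]
    have h1 := euler_step n y
    have h2 := R_step n y
    linarith
  have hper : ∀ y : ℝ, p.eval (y + 2) = p.eval y := by
    intro y
    have h1 := hstep (y + 1)
    have h2 := hstep y
    rw [show y + 1 + 1 = y + 2 by ring] at h1
    linarith
  have hconst := periodic_poly_const p hper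
  have hc : p.eval 0 = 0 := by
    have h0 := hstep 0
    rw [hconst] at h0
    simp only [Polynomial.eval_C] at h0
    linarith
  have hx : p.eval x = 0 := by rw [hconst, hc, map_zero, Polynomial.eval_zero]
  simp only [hp, Polynomial.eval_sub, EPol_eval, RP_eval] at hx
  rw [hAk x]
  linarith

end Aux

theorem euler_poly_eq_stirling2_sum (n : ℕ) (x : ℝ) :
    eulerPoly n x =
      ∑ k ∈ Finset.range (n + 1),
        (S2 n k : ℝ) * (Nat.factorial k) *
          ∑ j ∈ Finset.range (k + 1), genBinom x j * (-1 / 2 : ℝ) ^ (k - j) := by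
  exact euler_poly_eq_stirling2_sum' n x
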